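/- Let R be a commutative ring. Then every cyclic dual self-CS-Baer R-module is lifting. -/

import Mathlib

section Defs

variable {R : Type*} [Ring R] {M : Type*} [AddCommGroup M] [Module R M]

/-- `K` is a direct summand of `M`. -/
def IsDirectSummand (K : Submodule R M) : Prop :=
  ∃ K' : Submodule R M, IsCompl K K'

/-- `X` is an essential submodule of `Y`. -/
def EssentialIn (X Y : Submodule R M) : Prop :=
  X ≤ Y ∧ ∀ Z : Submodule R M, Z ≤ Y → X ⊓ Z = ⊥ → Z = ⊥

/-- `K` is a fully invariant submodule of `M`. -/
def FullyInvariant (K : Submodule R M) : Prop :=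
  ∀ f : M →ₗ[R] M, K.map f ≤ K

/-- `L` lies above the direct summand `K`: `K` is a direct summand of `M`, `K ≤ L`
and `L/K` is superfluous (small) in `M/K`. -/
def LiesAbove (L K : Submodule R M) : Prop :=
  IsDirectSummand K ∧ K ≤ L ∧
    ∀ X : Submodule R M, K ≤ X → L ⊔ X = ⊤ → X = ⊤

/-- `lU(X)`: the set of endomorphisms of `M` vanishing on `X`. -/
def lU (X : Submodule R M) : Set (M →ₗ[R] M) :=
  {f : M →ₗ[R] M | X ≤ LinearMap.ker f}

end Defs

section ModDefs

variable (R : Type*) [Ring R] (M : Type*) [AddCommGroup M] [Module R M]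
  (N : Type*) [AddCommGroup N] [Module R N]

/-- `N` is `M`-CS-Rickart. -/
def CSRickart : Prop :=
  ∀ f : M →ₗ[R] N, ∃ K : Submodule R M,
    IsDirectSummand K ∧ EssentialIn (LinearMap.ker f) K

/-- `N` is `M`-CS-Baer. -/
def CSBaer : Prop :=
  ∀ (ι : Type*) (f : ι → (M →ₗ[R] N)), ∃ K : Submodule R M,
    IsDirectSummand K ∧ EssentialIn (⨅ i, LinearMap.ker (f i)) K

/-- `N` is strongly `M`-CS-Baer. -/
def StrongCSBaer : Prop :=
  ∀ (ι : Type*) (f : ι → (M →ₗ[R] N)), ∃ K : Submodule R M,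
    IsDirectSummand K ∧ FullyInvariant K ∧ EssentialIn (⨅ i, LinearMap.ker (f i)) K

/-- `N` is `M`-Baer. -/
def Baer : Prop :=
  ∀ (ι : Type*) (f : ι → (M →ₗ[R] N)),
    IsDirectSummand (⨅ i, LinearMap.ker (f i))

/-- `N` is `M`-𝒦-nonsingular. -/
def KNonsingular : Prop :=
  ∀ f : M →ₗ[R] N, EssentialIn (LinearMap.ker f) (⊤ : Submodule R M) → f = 0

/-- every direct summand of `M` is fully invariant. -/
def WeakDuo : Prop :=
  ∀ K : Submodule R M, IsDirectSummand K → FullyInvariant K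

/-- `M` is extending. -/
def Extending : Prop :=
  ∀ L : Submodule R M, ∃ K : Submodule R M, IsDirectSummand K ∧ EssentialIn L K

/-- `M` is lifting. -/
def Lifting : Prop :=
  ∀ L : Submodule R M, ∃ K : Submodule R M, LiesAbove L K

/-- `M` is dual self-CS-Rickart. -/
def DualSelfCSRickart : Prop :=
  ∀ f : M →ₗ[R] M, ∃ K : Submodule R M, LiesAbove (LinearMap.range f) K

/-- `M` is dual self-CS-Baer. -/
def DualSelfCSBaer : Prop :=
  ∀ (ι : Type*) (f : ι → (M →ₗ[R] M)), ∃ K : Submodule R M,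
    LiesAbove (⨆ i, LinearMap.range (f i)) K

/-- `M` is dual strongly self-CS-Baer. -/
def DualStrongSelfCSBaer : Prop :=
  ∀ (ι : Type*) (f : ι → (M →ₗ[R] M)), ∃ K : Submodule R M,
    FullyInvariant K ∧ LiesAbove (⨆ i, LinearMap.range (f i)) K

/-- `M` is SSIP-extending. -/
def SSIPExtending : Prop :=
  ∀ (ι : Type*) (A : ι → Submodule R M),
    (∀ i, ∃ K : Submodule R M, IsDirectSummand K ∧ EssentialIn (A i) K) →
    ∃ K : Submodule R M, IsDirectSummand K ∧ EssentialIn (⨅ i, A i) K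

/-- `M` is ESSIP. -/
def ESSIP : Prop :=
  ∀ (ι : Type*) (A : ι → Submodule R M), (∀ i, IsDirectSummand (A i)) →
    ∃ K : Submodule R M, IsDirectSummand K ∧ EssentialIn (⨅ i, A i) K

/-- The socle of `M`: the sum of all simple (atomic) submodules. -/
def Socle : Submodule R M := sSup {S : Submodule R M | IsAtom S}

/-- `M` is E-M-𝒦-cononsingular. -/
def ECononsingular : Prop :=
  ∀ X Y : Submodule R M, X ≤ Y → lU X = lU Y → EssentialIn X Y

/-- `M` is E-M-𝒦-nonsingular. -/
def ENonsingular : Prop :=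
  ∀ f : M →ₗ[R] M,
    (∃ K : Submodule R M, IsDirectSummand K ∧ EssentialIn (LinearMap.ker f) K) → f = 0

/-- `M` is nonsingular: the singular submodule vanishes. -/
def Nonsingular : Prop :=
  ∀ x : M, EssentialIn (LinearMap.ker (LinearMap.toSpanSingleton R M x))
      (⊤ : Submodule R R) → x = 0

end ModDefs

/-- `R` is semiperfect: `R/J(R)` is semisimple and idempotents lift modulo `J(R)`. -/
def IsSemiperfectRing (R : Type*) [Ring R] : Prop :=
  IsSemisimpleModule R (R ⧸ Ideal.jacobson (⊥ : Ideal R)) ∧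
    ∀ a : R, a * a - a ∈ Ideal.jacobson (⊥ : Ideal R) →
      ∃ e : R, IsIdempotentElem e ∧ e - a ∈ Ideal.jacobson (⊥ : Ideal R)

/-- `R` is semiregular: every principal (one-sided) ideal of `R` lies above a
direct summand of `R` as a module over itself. -/
def IsSemiregularRing (R : Type*) [Ring R] : Prop :=
  ∀ a : R, ∃ K : Submodule R R, LiesAbove (Submodule.span R {a}) K

section Aux

variable {R : Type*} [CommRing R] {M : Type*} [AddCommGroup M] [Module R M] {y : M}

namespace CDB

lemma exists_smul_eq (hy : Submodule.span R {y} = ⊤) (m : M) : ∃ r : R, r • y = m :=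
  Submodule.mem_span_singleton.mp (hy ▸ Submodule.mem_top)

lemma endo_smul (hy : Submodule.span R {y} = ⊤) (g : M →ₗ[R] M) :
    ∃ a : R, ∀ m, g m = a • m := by
  obtain ⟨a, ha⟩ := exists_smul_eq hy (g y)
  refine ⟨a, fun m => ?_⟩
  obtain ⟨r, rfl⟩ := exists_smul_eq hy m
  rw [map_smul, ← ha]
  exact smul_comm r a y

lemma range_smul_id (hy : Submodule.span R {y} = ⊤) (a : R) :
    LinearMap.range (a • (LinearMap.id : M →ₗ[R] M)) = Submodule.span R {a • y} := by
  apply le_antisymm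
  · rintro _ ⟨m, rfl⟩
    obtain ⟨r, rfl⟩ := exists_smul_eq hy m
    simp only [LinearMap.smul_apply, LinearMap.id_apply]
    rw [smul_comm]
    exact Submodule.smul_mem _ r (Submodule.mem_span_singleton_self _)
  · rw [Submodule.span_le, Set.singleton_subset_iff]
    exact ⟨y, by simp⟩

lemma summand_repr (hy : Submodule.span R {y} = ⊤) {K : Submodule R M}
    (hK : IsDirectSummand K) :
    ∃ e : R, (e * e) • y = e • y ∧ K = Submodule.span R {e • y} := by
  obtain ⟨K', hc⟩ := hK
  set π : M →ₗ[R] M := K.subtype.comp (K.projectionOnto K' hc) with hπ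
  have hπmem : ∀ m, π m ∈ K := fun m => (K.linearProjOfIsCompl K' hc m).2
  have hπid : ∀ m ∈ K, π m = m := by
    intro m hm
    have := Submodule.linearProjOfIsCompl_apply_left hc ⟨m, hm⟩
    simp [hπ, this]
  obtain ⟨e, he⟩ := endo_smul hy π
  have hey : e • y = π y := (he y).symm
  refine ⟨e, ?_, ?_⟩
  · rw [mul_smul, hey, ← he (π y), hπid _ (hπmem y)]
  · apply le_antisymm
    · intro k hk
      obtain ⟨r, rfl⟩ := exists_smul_eq hy k
      have : r • y = π (r • y) := (hπid _ hk).symm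
      rw [this, he, smul_comm]
      exact Submodule.smul_mem _ r (Submodule.mem_span_singleton_self _)
    · rw [Submodule.span_le, Set.singleton_subset_iff]
      rw [hey]
      exact hπmem y

lemma idem_summand (hy : Submodule.span R {y} = ⊤) {e : R} (he : (e * e) • y = e • y) :
    IsDirectSummand (Submodule.span R {e • y}) := by
  have hA : (e * e - e) • y = 0 := by rw [sub_smul, he, sub_self]
  refine ⟨Submodule.span R {(1 - e) • y}, ?_, ?_⟩
  · rw [Submodule.disjoint_def]
    intro x hx1 hx2
    obtain ⟨r, hr⟩ := Submodule.mem_span_singleton.mp hx1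
    obtain ⟨s, hs⟩ := Submodule.mem_span_singleton.mp hx2
    have h1 : e • x = x := by
      rw [← hr]
      have : e • (r • e • y) = r • e • y + r • ((e * e - e) • y) := by module
      rw [this, hA, smul_zero, add_zero]
    have h2 : e • x = 0 := by
      rw [← hs]
      have : e • (s • (1 - e) • y) = (-s) • ((e * e - e) • y) := by module
      rw [this, hA, smul_zero]
    rw [← h1, h2]
  · rw [codisjoint_iff, eq_top_iff, ← hy, Submodule.span_le, Set.singleton_subset_iff]
    exact Submodule.mem_sup.mpr ⟨e • y, Submodule.mem_span_singleton_self _,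
      (1 - e) • y, Submodule.mem_span_singleton_self _, by module⟩

lemma lemA (hy : Submodule.span R {y} = ⊤) (h : DualSelfCSBaer R M) (a : R) :
    ∃ e : R, (e * e) • y = e • y ∧
      LiesAbove (Submodule.span R {a • y}) (Submodule.span R {e • y}) := by
  obtain ⟨K, hK⟩ := h PUnit (fun _ => a • LinearMap.id)
  have hsup : (⨆ _ : PUnit, LinearMap.range (a • (LinearMap.id : M →ₗ[R] M)))
      = Submodule.span R {a • y} := by
    rw [iSup_const, range_smul_id hy]
  rw [hsup] at hK
  obtain ⟨e, he, rfl⟩ := summand_repr hy hK.1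
  exact ⟨e, he, hK⟩

lemma lemB (hy : Submodule.span R {y} = ⊤) (h : DualSelfCSBaer R M) (e : ℕ → R)
    (hidem : ∀ n, (e n * e n) • y = e n • y)
    (horth : ∀ n m, n ≠ m → (e n * e m) • y = (0 : M))
    (hne : ∀ n, e n • y ≠ 0) : False := by
  obtain ⟨K, hKs, hKle, hsmall⟩ := h (ULift ℕ) (fun n => e n.down • LinearMap.id)
  set L := ⨆ n : ULift ℕ, LinearMap.range (e n.down • (LinearMap.id : M →ₗ[R] M)) with hL
  have hLspan : L = Submodule.span R (Set.range fun n : ULift ℕ => e n.down • y) := by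
    rw [hL, Submodule.span_range_eq_iSup]
    exact iSup_congr fun n => range_smul_id hy _
  obtain ⟨ε, hε, hKeq⟩ := summand_repr hy hKs
  have hmem : ε • y ∈ L := hKle (hKeq ▸ Submodule.mem_span_singleton_self _)
  rw [hLspan, Finsupp.mem_span_range_iff_exists_finsupp] at hmem
  obtain ⟨c, hc⟩ := hmem
  obtain ⟨μ', hμ'⟩ := Infinite.exists_notMem_finset c.support
  set μ : ℕ := μ'.down with hμdef
  have hkey : e μ • (ε • y) = 0 := by
    rw [← hc, Finsupp.smul_sum, Finsupp.sum]
    apply Finset.sum_eq_zero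
    intro i hi
    have hiμ : i.down ≠ μ := by
      intro hcontra
      apply hμ'
      have : i = μ' := by cases i; cases μ'; simpa [hμdef] using hcontra
      rwa [← this]
    have : e μ • (c i • e i.down • y) = c i • ((e μ * e i.down) • y) := by module
    rw [this, horth μ i.down (Ne.symm hiμ), smul_zero]
  set X : Submodule R M := Submodule.span R {(1 - e μ) • y, ε • y} with hX
  have hKX : K ≤ X := by
    rw [hKeq, Submodule.span_le, Set.singleton_subset_iff]
    exact Submodule.subset_span (by simp)
  have hLX : L ⊔ X = ⊤ := by
    rw [eq_top_iff, ← hy, Submodule.span_le, Set.singleton_subset_iff]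
    refine Submodule.mem_sup.mpr ⟨e μ • y, ?_, (1 - e μ) • y,
      Submodule.subset_span (by simp), by module⟩
    rw [hLspan]
    exact Submodule.subset_span ⟨ULift.up μ, rfl⟩
  have hXtop : X = ⊤ := hsmall X hKX hLX
  have hyX : y ∈ X := hXtop ▸ Submodule.mem_top
  rw [hX, Submodule.mem_span_pair] at hyX
  obtain ⟨r, s, hrs⟩ := hyX
  apply hne μ
  have hAμ : (e μ * e μ - e μ) • y = 0 := by rw [sub_smul, hidem μ, sub_self]
  have h1 : e μ • (r • (1 - e μ) • y) = (-r) • ((e μ * e μ - e μ) • y) := by module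
  have h2 : e μ • (s • ε • y) = s • (e μ • (ε • y)) := by module
  have := congrArg (fun m => e μ • m) hrs
  simp only [smul_add] at this
  rw [h1, h2, hAμ, hkey, smul_zero, smul_zero, zero_add] at this
  exact this.symm

lemma chain_le (e : ℕ → R) (hidem : ∀ n, (e n * e n) • y = e n • y)
    (hstep : ∀ n, (e n * e (n + 1)) • y = e n • y) :
    ∀ n m, n ≤ m → (e n * e m) • y = e n • y := by
  intro n m hnm
  induction m, hnm using Nat.le_induction with
  | base => exact hidem n
  | succ m hnm ih =>
    calc (e n * e (m + 1)) • y = e (m + 1) • (e n • y) := by module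
      _ = e (m + 1) • ((e n * e m) • y) := by rw [ih]
      _ = e n • ((e m * e (m + 1)) • y) := by module
      _ = e n • (e m • y) := by rw [hstep m]
      _ = (e n * e m) • y := by module
      _ = e n • y := ih

lemma lemC (hy : Submodule.span R {y} = ⊤) (h : DualSelfCSBaer R M) (L : Submodule R M) :
    ∃ e : R, ((e * e) • y = e • y ∧ e • y ∈ L) ∧
      ∀ f : R, ((f * f) • y = f • y ∧ f • y ∈ L) →
        (e * f) • y = e • y → (f * e) • y = f • y := by
  by_contra hno
  push_neg at hno
  set P : R → Prop := fun e => (e * e) • y = e • y ∧ e • y ∈ L with hP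
  have h0 : P 0 := by constructor <;> simp
  have hnext : ∀ ep : {e : R // P e}, ∃ fq : {e : R // P e},
      (ep.1 * fq.1) • y = ep.1 • y ∧ (fq.1 * ep.1) • y ≠ fq.1 • y := by
    rintro ⟨e, he⟩
    obtain ⟨f, hf1, hf2, hf3⟩ := hno e he
    exact ⟨⟨f, hf1⟩, hf2, hf3⟩
  choose next hn1 hn2 using hnext
  set seq : ℕ → {e : R // P e} := fun n => next^[n] ⟨0, h0⟩ with hseqdef
  have hseq : ∀ n, seq (n + 1) = next (seq n) := fun n =>
    Function.iterate_succ_apply' next n ⟨0, h0⟩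
  set e : ℕ → R := fun n => (seq n).1 with he
  have hPn : ∀ n, P (e n) := fun n => (seq n).2
  have hs1 : ∀ n, (e n * e (n + 1)) • y = e n • y := by
    intro n
    have := hn1 (seq n)
    rwa [← hseq n] at this
  have hs2 : ∀ n, (e (n + 1) * e n) • y ≠ e (n + 1) • y := by
    intro n
    have := hn2 (seq n)
    rwa [← hseq n] at this
  have hchain := chain_le e (fun n => (hPn n).1) hs1
  set g : ℕ → R := fun n => e (n + 1) - e n with hg
  have hgidem : ∀ n, (g n * g n) • y = g n • y := by
    intro n
    have hexp : (g n * g n) • y =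
        (e (n + 1) * e (n + 1)) • y - (e n * e (n + 1)) • y
          - (e n * e (n + 1)) • y + (e n * e n) • y := by rw [hg]; module
    rw [hexp, (hPn (n + 1)).1, (hPn n).1, hchain n (n + 1) (by omega), hg]
    module
  have hgorth : ∀ n m, n ≠ m → (g n * g m) • y = (0 : M) := by
    have key : ∀ n m, n < m → (g n * g m) • y = (0 : M) := by
      intro n m hnm
      have hexp : (g n * g m) • y =
          (e (n + 1) * e (m + 1)) • y - (e (n + 1) * e m) • y
            - (e n * e (m + 1)) • y + (e n * e m) • y := by rw [hg]; module
      rw [hexp, hchain (n + 1) (m + 1) (by omega), hchain (n + 1) m (by omega),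
        hchain n (m + 1) (by omega), hchain n m (by omega)]
      abel
    intro n m hnm
    rcases lt_or_gt_of_ne hnm with hlt | hgt
    · exact key n m hlt
    · rw [mul_comm]; exact key m n hgt
  have hgne : ∀ n, g n • y ≠ 0 := by
    intro n hcontra
    apply hs2 n
    have heq : e (n + 1) • y = e n • y := by
      have : g n • y = e (n + 1) • y - e n • y := by rw [hg]; module
      rw [this] at hcontra
      exact sub_eq_zero.mp hcontra
    calc (e (n + 1) * e n) • y = e (n + 1) • (e n • y) := by module
      _ = e (n + 1) • (e (n + 1) • y) := by rw [heq]
      _ = (e (n + 1) * e (n + 1)) • y := by module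
      _ = e (n + 1) • y := (hPn (n + 1)).1
  exact lemB hy h g hgidem hgorth hgne

lemma lemD (L : Submodule R M) (e f : R)
    (hei : (e * e) • y = e • y) (heL : e • y ∈ L)
    (hmax : ∀ f' : R, ((f' * f') • y = f' • y ∧ f' • y ∈ L) →
      (e * f') • y = e • y → (f' * e) • y = f' • y)
    (hfi : (f * f) • y = f • y) (hfL : f • y ∈ L) :
    f • y ∈ Submodule.span R {e • y} := by
  have hA : (e * e - e) • y = 0 := by rw [sub_smul, hei, sub_self]
  have hB : (f * f - f) • y = 0 := by rw [sub_smul, hfi, sub_self]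
  set g : R := e + f - e * f with hg
  have hg1 : (g * g) • y = g • y := by
    have : (g * g) • y = g • y + (1 - f + (f * f - f)) • ((e * e - e) • y)
        + (1 - e) • ((f * f - f) • y) := by rw [hg]; module
    rw [this, hA, hB, smul_zero, smul_zero, add_zero, add_zero]
  have hg2 : g • y ∈ L := by
    have : g • y = e • y + f • y - e • (f • y) := by rw [hg]; module
    rw [this]
    exact sub_mem (add_mem heL hfL) (L.smul_mem e hfL)
  have hg3 : (e * g) • y = e • y := by
    have : (e * g) • y = e • y + (1 - f) • ((e * e - e) • y) := by rw [hg]; module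
    rw [this, hA, smul_zero, add_zero]
  have h4 : (g * e) • y = g • y := hmax g ⟨hg1, hg2⟩ hg3
  have h6 : g • y = e • y := by rw [← h4, mul_comm g e, hg3]
  have h5 : f • y = f • (e • y) := by
    have : f • y = f • (e • y) + (g • y - e • y) := by rw [hg]; module
    rw [this, h6, sub_self, add_zero]
  rw [h5]
  exact Submodule.smul_mem _ f (Submodule.mem_span_singleton_self _)

end CDB

end Aux

/-- over a commutative ring, every cyclic dual self-CS-Baer module
is lifting. -/
theorem cyclic_dualSelfCSBaer_is_lifting
    {R : Type*} [CommRing R] {M : Type*} [AddCommGroup M] [Module R M]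
    (hcyc : ∃ y : M, Submodule.span R {y} = ⊤)
    (h : DualSelfCSBaer R M) :
    Lifting R M := by
  obtain ⟨y, hy⟩ := hcyc
  intro L
  obtain ⟨e, ⟨hei, heL⟩, hemax⟩ := CDB.lemC hy h L
  refine ⟨Submodule.span R {e • y}, CDB.idem_summand hy hei, ?_, ?_⟩
  · rw [Submodule.span_le, Set.singleton_subset_iff]; exact heL
  · intro X hKX hLX
    have hyLX : y ∈ L ⊔ X := hLX ▸ Submodule.mem_top
    obtain ⟨l, hl, x, hx, hlx⟩ := Submodule.mem_sup.mp hyLX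
    obtain ⟨a, rfl⟩ := CDB.exists_smul_eq hy l
    obtain ⟨f, hfi, hfsum, hfle, hfsmall⟩ := CDB.lemA hy h a
    have haL : Submodule.span R {a • y} ≤ L := by
      rw [Submodule.span_le, Set.singleton_subset_iff]; exact hl
    have hfL : f • y ∈ L := haL (hfle (Submodule.mem_span_singleton_self _))
    have hfX : f • y ∈ X := hKX (CDB.lemD L e f hei heL hemax hfi hfL)
    refine hfsmall X ?_ ?_
    · rw [Submodule.span_le, Set.singleton_subset_iff]; exact hfX
    · rw [eq_top_iff, ← hy, Submodule.span_le, Set.singleton_subset_iff]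
      exact Submodule.mem_sup.mpr ⟨a • y, Submodule.mem_span_singleton_self _, x, hx, hlx⟩
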